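/- For each β > 1, the function x ↦ Σ_{n=1}^∞ (2j_{β−1,n})² · exp(−(2j_{β−1,n})²·x), where (j_{β−1,n}) are the positive zeros of the Bessel function J_{β−1}, is a nonnegative measurable function on (0,∞) satisfying ∫₀^∞ min(1,x)·π(x) dx < ∞; i.e., it is the density of a Lévy measure of a subordinator. -/

import Mathlib

open MeasureTheory Set Filter

/-- Bessel function of the first kind,
`J_ν(x) = Σ_{k≥0} (−1)^k (x/2)^{ν+2k}/(k!·Γ(ν+k+1))` (for `x > 0`). -/
noncomputable def besselJ (ν x : ℝ) : ℝ :=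
  ∑' k : ℕ, (-1) ^ k * (x / 2) ^ (ν + 2 * (k:ℝ)) / ((k.factorial : ℝ) * Real.Gamma (ν + k + 1))

/-- For a nonnegative family, the real `tsum` equals the `toReal` of the `ENNReal` sum. -/
lemma tsum_eq_toReal_tsum_ofReal (f : ℕ → ℝ) (hf : ∀ n, 0 ≤ f n) :
    ∑' n, f n = (∑' n, ENNReal.ofReal (f n)).toReal := by
  by_cases hs : Summable f
  · rw [← ENNReal.ofReal_tsum_of_nonneg hf hs, ENNReal.toReal_ofReal (tsum_nonneg hf)]
  · rw [tsum_eq_zero_of_not_summable hs]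
    by_cases htop : ∑' n, ENNReal.ofReal (f n) = ⊤
    · rw [htop]; simp
    · exfalso
      apply hs
      have := ENNReal.summable_toReal htop
      refine this.congr fun n => ?_
      rw [ENNReal.toReal_ofReal (hf n)]

lemma measurable_tsum_of_nonneg (f : ℕ → ℝ → ℝ) (hf : ∀ n, Measurable (f n))
    (h0 : ∀ n x, 0 ≤ f n x) : Measurable (fun x => ∑' n, f n x) := by
  have : (fun x => ∑' n, f n x) =
      fun x => (∑' n, ENNReal.ofReal (f n x)).toReal := by
    funext x
    exact tsum_eq_toReal_tsum_ofReal _ (fun n => h0 n x)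
  rw [this]
  exact (Measurable.ennreal_tsum fun n => (hf n).ennreal_ofReal).ennreal_toReal

theorem stmt12 (β : ℝ) (hβ : 1 < β)
    (j : ℕ → ℝ) (hjpos : ∀ n, 0 < j n)
    (hzero : ∀ n, besselJ (β - 1) (j n) = 0)
    (hmono : StrictMono j)
    (hgrowth : ∃ c > (0:ℝ), ∀ᶠ n in atTop, c * n ≤ j n)
    (π : ℝ → ℝ)
    (hπ : ∀ x : ℝ, π x =
      ∑' n : ℕ, (2 * j n) ^ 2 * Real.exp (-((2 * j n) ^ 2) * x)) :
    Measurable π ∧ (∀ x ∈ Ioi (0:ℝ), 0 ≤ π x) ∧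
      (∫⁻ x in Ioi (0:ℝ), ENNReal.ofReal (min 1 x * π x)) < ⊤ := by
  set a : ℕ → ℝ := fun n => (2 * j n) ^ 2 with ha
  have hapos : ∀ n, 0 < a n := fun n => by have := hjpos n; positivity
  set g : ℕ → ℝ → ℝ := fun n x => a n * Real.exp (-(a n) * x) with hg
  have hgnonneg : ∀ n x, 0 ≤ g n x := fun n x => by positivity
  have hgmeas : ∀ n, Measurable (g n) := fun n => by
    apply Measurable.const_mul
    exact (Real.measurable_exp.comp (measurable_id.const_mul _))
  have hπeq : π = fun x => ∑' n, g n x := by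
    funext x; rw [hπ x]
  refine ⟨?_, ?_, ?_⟩
  · rw [hπeq]
    exact measurable_tsum_of_nonneg g hgmeas hgnonneg
  · intro x _
    rw [hπ x]
    exact tsum_nonneg fun n => by positivity
  · -- main finiteness
    -- step 1: pointwise bound
    have hpt : ∀ x ∈ Ioi (0:ℝ), ENNReal.ofReal (min 1 x * π x) ≤
        ∑' n, ENNReal.ofReal (x * g n x) := by
      intro x hx
      have hx0 : (0:ℝ) < x := hx
      have hmin0 : 0 ≤ min 1 x := le_min zero_le_one hx0.le
      rw [hπ x, ENNReal.ofReal_mul hmin0]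
      have h1 : ENNReal.ofReal (∑' n, g n x) ≤ ∑' n, ENNReal.ofReal (g n x) := by
        by_cases hs : Summable fun n => g n x
        · rw [ENNReal.ofReal_tsum_of_nonneg (fun n => hgnonneg n x) hs]
        · rw [tsum_eq_zero_of_not_summable hs]; simp
      calc ENNReal.ofReal (min 1 x) * ENNReal.ofReal (∑' n, g n x)
          ≤ ENNReal.ofReal (min 1 x) * ∑' n, ENNReal.ofReal (g n x) := by
            exact mul_le_mul_right h1 _
        _ = ∑' n, ENNReal.ofReal (min 1 x) * ENNReal.ofReal (g n x) :=
            ENNReal.tsum_mul_left.symm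
        _ ≤ ∑' n, ENNReal.ofReal (x * g n x) := by
            refine ENNReal.tsum_le_tsum fun n => ?_
            rw [← ENNReal.ofReal_mul hmin0]
            exact ENNReal.ofReal_le_ofReal
              (mul_le_mul_of_nonneg_right (min_le_right 1 x) (hgnonneg n x))
    -- step 2: each integral equals 1 / a n
    have hint : ∀ n, (∫⁻ x in Ioi (0:ℝ), ENNReal.ofReal (x * g n x)) =
        ENNReal.ofReal (1 / a n) := by
      intro n
      have hInt : IntegrableOn (fun x => x * g n x) (Ioi (0:ℝ)) := by
        have := integrableOn_rpow_mul_exp_neg_mul_rpow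
          (by norm_num : (-1:ℝ) < 1) (by norm_num : (0:ℝ) < 1) (hapos n)
        simp only [Real.rpow_one] at this
        have h2 := this.const_mul (a n)
        refine IntegrableOn.congr_fun h2 (fun x _ => ?_) measurableSet_Ioi
        simp only [hg]; ring
      rw [← ofReal_integral_eq_lintegral_ofReal hInt]
      · congr 1
        have key := Real.integral_rpow_mul_exp_neg_mul_Ioi
          (by norm_num : (0:ℝ) < 2) (hapos n)
        have : (∫ t in Ioi (0:ℝ), t ^ ((2:ℝ) - 1) * Real.exp (-(a n * t))) =
            ∫ t in Ioi (0:ℝ), t * Real.exp (-(a n * t)) := by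
          refine setIntegral_congr_fun measurableSet_Ioi fun t _ => ?_
          norm_num
        rw [this] at key
        calc ∫ x in Ioi (0:ℝ), x * g n x
            = a n * ∫ t in Ioi (0:ℝ), t * Real.exp (-(a n * t)) := by
              rw [← integral_const_mul]
              refine setIntegral_congr_fun measurableSet_Ioi fun t _ => ?_
              simp [hg]; ring
          _ = a n * ((1 / a n) ^ (2:ℝ) * Real.Gamma 2) := by rw [key]
          _ = 1 / a n := by
              rw [Real.Gamma_two, mul_one, Real.rpow_two]
              field_simp
      · filter_upwards [ae_restrict_mem measurableSet_Ioi] with x hx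
        exact mul_nonneg (le_of_lt hx) (hgnonneg n x)
    -- step 3: summability of 1 / a n
    obtain ⟨c, hc, hev⟩ := hgrowth
    obtain ⟨N₀, hN₀⟩ := eventually_atTop.mp hev
    set N := max N₀ 1 with hN
    have hsum : Summable fun n => 1 / a n := by
      rw [← summable_nat_add_iff N]
      have hcmp : ∀ n : ℕ, 1 / a (n + N) ≤ (1 / (4 * c ^ 2)) * (1 / ((n + N : ℕ):ℝ) ^ 2) := by
        intro n
        have hnN : N₀ ≤ n + N := le_trans (le_max_left _ _) (Nat.le_add_left N n)
        have hj := hN₀ (n + N) hnN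
        have hn1 : (1:ℝ) ≤ ((n + N : ℕ):ℝ) := by
          have : 1 ≤ n + N := le_trans (le_max_right _ _) (Nat.le_add_left N n)
          exact_mod_cast this
        have hjpos' := hjpos (n + N)
        have hcn : 0 < c * ((n + N : ℕ):ℝ) := by positivity
        have hle : c * ((n + N : ℕ):ℝ) ≤ j (n + N) := hj
        have h1 : (c * ((n + N : ℕ):ℝ)) ^ 2 ≤ (j (n + N)) ^ 2 :=
          pow_le_pow_left₀ hcn.le hle 2
        have ha' : a (n + N) = 4 * (j (n + N)) ^ 2 := by simp [ha]; ring
        rw [ha', div_le_iff₀ (by positivity)]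
        have heq : 1 / (4 * c ^ 2) * (1 / ((n + N : ℕ):ℝ) ^ 2) * (4 * j (n + N) ^ 2)
            = (j (n + N)) ^ 2 / ((c * ((n + N : ℕ):ℝ)) ^ 2) := by
          field_simp
        rw [heq, le_div_iff₀ (by positivity), one_mul]
        exact h1
      refine Summable.of_nonneg_of_le (fun n => by positivity) hcmp ?_
      apply Summable.mul_left
      have : Summable fun n : ℕ => 1 / ((n:ℝ)) ^ 2 := by
        rw [Real.summable_one_div_nat_pow]
        norm_num
      have := (summable_nat_add_iff N).mpr this
      exact this.congr fun n => by push_cast; ring_nf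
    -- conclude
    have hfin : (∑' n, ENNReal.ofReal (1 / a n)) < ⊤ := by
      rw [← ENNReal.ofReal_tsum_of_nonneg (fun n => by positivity) hsum]
      exact ENNReal.ofReal_lt_top
    calc (∫⁻ x in Ioi (0:ℝ), ENNReal.ofReal (min 1 x * π x))
        ≤ ∫⁻ x in Ioi (0:ℝ), ∑' n, ENNReal.ofReal (x * g n x) := by
          refine setLIntegral_mono' measurableSet_Ioi hpt
      _ = ∑' n, ∫⁻ x in Ioi (0:ℝ), ENNReal.ofReal (x * g n x) := by
          refine lintegral_tsum fun n => ?_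
          exact ((measurable_id.mul (hgmeas n)).ennreal_ofReal).aemeasurable
      _ = ∑' n, ENNReal.ofReal (1 / a n) := by
          exact tsum_congr hint
      _ < ⊤ := hfin
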